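/- Let E = dE_0 − m_1E_1 − ⋯ − m_rE_r be an E-standard class in Pic_r satisfying E·E = 1 and E·K = 1 (equivalently d² − Σm_i² = 1 and Σm_i = 3d + 1). Then (d; m_1, …, m_r), after discarding trailing zeros, is one of the following three sequences: (4; 2, 1, 1, 1, 1, 1, 1, 1, 1, 1, 1, 1) — the class G_1 = 4E_0 − 2E_1 − E_2 − ⋯ − E_12; (6; 2, 2, 2, 2, 2, 2, 2, 2, 1, 1, 1) — the class G_2 = 6E_0 − 2E_1 − ⋯ − 2E_8 − E_9 − E_10 − E_11; or (9; 3, 3, 3, 3, 3, 3, 3, 3, 2, 2) — the class G_3 = 9E_0 − 3E_1 − ⋯ − 3E_8 − 2E_9 − 2E_10. In particular r ≥ 10. -/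
import Mathlib


open Finset

/-- The intersection form on `Pic_r = ℤ^{r+1}`: the symmetric bilinear form with
`E_0·E_0 = 1`, `E_i·E_i = -1` for `1 ≤ i ≤ r`, and `E_i·E_j = 0` for `i ≠ j`. -/
def inter {r : ℕ} (x y : Fin (r + 1) → ℤ) : ℤ :=
  2 * (x 0 * y 0) - ∑ i, x i * y i

/-- The standard basis class `E_i` of `Pic_r`. -/
def Eb (r : ℕ) (i : Fin (r + 1)) : Fin (r + 1) → ℤ :=
  fun j => if j = i then 1 else 0

/-- The canonical class `K = -3E_0 + E_1 + ⋯ + E_r`. -/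
def Kc (r : ℕ) : Fin (r + 1) → ℤ :=
  fun j => if j = 0 then -3 else 1

/-- The roots `r_0 = E_0 - E_1 - E_2 - E_3` and `r_i = E_i - E_{i+1}` for `1 ≤ i ≤ r-1`. -/
def root (r : ℕ) (i : Fin r) : Fin (r + 1) → ℤ :=
  if (i : ℕ) = 0 then Eb r 0 - Eb r 1 - Eb r 2 - Eb r 3
  else Eb r i.castSucc - Eb r i.succ

/-- The reflection `σ_v(x) = x + (x·v) v` in the root `v`. -/
def reflect {r : ℕ} (v x : Fin (r + 1) → ℤ) : Fin (r + 1) → ℤ :=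
  x + inter x v • v

/-- Membership in the Weyl group `W_r`: the group of transformations of `Pic_r`
generated by the reflections `σ_i(x) = x + (x·r_i) r_i`, `0 ≤ i ≤ r-1` (since each
generator is an involution, the submonoid generated coincides with the subgroup
generated). -/
def InWeyl (r : ℕ) (f : (Fin (r + 1) → ℤ) → (Fin (r + 1) → ℤ)) : Prop :=
  f ∈ Submonoid.closure
    { g : Function.End (Fin (r + 1) → ℤ) | ∃ i : Fin r, g = reflect (root r i) }

/-- `H = dE_0 - m_1E_1 - ⋯ - m_rE_r` (so `d = H 0`, `m_i = -H i`) is E-standard: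
`d ≥ m_1 ≥ ⋯ ≥ m_r ≥ 0`, `d ≥ m_1 + m_2` and `d ≥ m_1 + m_2 + m_3`. -/
def EStandard (r : ℕ) (H : Fin (r + 1) → ℤ) : Prop :=
  -H 1 ≤ H 0 ∧
  (∀ i j : Fin (r + 1), 1 ≤ (i : ℕ) → i ≤ j → -H j ≤ -H i) ∧
  0 ≤ -H (Fin.last r) ∧
  -H 1 + -H 2 ≤ H 0 ∧
  -H 1 + -H 2 + -H 3 ≤ H 0

/-- `H = dE_0 - m_1E_1 - ⋯ - m_rE_r` is E-semi-standard: `d ≥ 0`,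
`d ≥ m_1 ≥ ⋯ ≥ m_r` and `d ≥ m_1 + m_2 + m_3` (the `m_i` may be negative). -/
def ESemiStandard (r : ℕ) (H : Fin (r + 1) → ℤ) : Prop :=
  0 ≤ H 0 ∧
  -H 1 ≤ H 0 ∧
  (∀ i j : Fin (r + 1), 1 ≤ (i : ℕ) → i ≤ j → -H j ≤ -H i) ∧
  -H 1 + -H 2 + -H 3 ≤ H 0

/-- A class is standard if its image under some element of `W_r` is E-standard. -/
def Standard (r : ℕ) (H : Fin (r + 1) → ℤ) : Prop :=
  ∃ f, InWeyl r f ∧ EStandard r (f H)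

/-- A class is semi-standard if its image under some element of `W_r` is
E-semi-standard. -/
def SemiStandard (r : ℕ) (H : Fin (r + 1) → ℤ) : Prop :=
  ∃ f, InWeyl r f ∧ ESemiStandard r (f H)

/-- An exceptional class: an element of the `W_r`-orbit of `E_r`. -/
def Exceptional (r : ℕ) (x : Fin (r + 1) → ℤ) : Prop :=
  ∃ f, InWeyl r f ∧ x = f (Eb r (Fin.last r))

/-- A line class: an element of the `W_r`-orbit of `E_0`. -/
def LineClass (r : ℕ) (x : Fin (r + 1) → ℤ) : Prop :=
  ∃ f, InWeyl r f ∧ x = f (Eb r 0)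

/-- A pencil class: an element of the `W_r`-orbit of `E_0 - E_1`. -/
def PencilClass (r : ℕ) (x : Fin (r + 1) → ℤ) : Prop :=
  ∃ f, InWeyl r f ∧ x = f (Eb r 0 - Eb r 1)

/-- The elliptic generating class `C_i = 3E_0 - E_1 - ⋯ - E_i`. -/
def Cc (r : ℕ) (i : Fin (r + 1)) : Fin (r + 1) → ℤ :=
  fun j => if j = 0 then 3 else if j ≤ i then -1 else 0

/-- The Euler characteristic `χ(H) = 1 + (H·H - H·K)/2`. -/
def chi (r : ℕ) (H : Fin (r + 1) → ℤ) : ℤ :=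
  1 + (inter H H - inter H (Kc r)) / 2

/-- Let `E = dE_0 − m_1E_1 − ⋯ − m_rE_r` be an E-standard class in `Pic_r` with
`E·E = 1` and `E·K = 1`. Then `(d; m_1, …, m_r)`, after discarding trailing zeros,
is one of the three sequences
`G_1 = 4E_0 − 2E_1 − E_2 − ⋯ − E_12`,
`G_2 = 6E_0 − 2E_1 − ⋯ − 2E_8 − E_9 − E_10 − E_11`,
`G_3 = 9E_0 − 3E_1 − ⋯ − 3E_8 − 2E_9 − 2E_10`.
In particular `r ≥ 10` (recall `d = H 0`, `m_i = -H i`). -/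

private lemma sum_split' {f : ℕ → ℤ} {k r : ℕ} (h : k ≤ r) :
    ∑ n ∈ range r, f n = (∑ n ∈ range k, f n) + ∑ n ∈ Ico k r, f n := by
  rw [range_eq_Ico, ← Finset.sum_Ico_consecutive f (Nat.zero_le k) h, ← range_eq_Ico]

private lemma sum_le_card' (s : Finset ℕ) (f : ℕ → ℤ) (c : ℤ) (h : ∀ n ∈ s, f n ≤ c) :
    ∑ n ∈ s, f n ≤ s.card * c := by
  calc ∑ n ∈ s, f n ≤ s.card • c := Finset.sum_le_card_nsmul s f c h
  _ = s.card * c := nsmul_eq_mul _ _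

private lemma card_le_sum' (s : Finset ℕ) (f : ℕ → ℤ) (c : ℤ) (h : ∀ n ∈ s, c ≤ f n) :
    (s.card : ℤ) * c ≤ ∑ n ∈ s, f n := by
  calc (s.card * c : ℤ) = s.card • c := (nsmul_eq_mul _ _).symm
  _ ≤ _ := Finset.card_nsmul_le_sum s f c h

theorem classify (r : ℕ) (hr : 3 ≤ r) (d : ℤ) (M : ℕ → ℤ)
    (hmono : ∀ a b : ℕ, a ≤ b → M b ≤ M a)
    (hnn : ∀ n, 0 ≤ M n)
    (hzero : ∀ n, r ≤ n → M n = 0)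
    (h3 : M 0 + M 1 + M 2 ≤ d)
    (hS : ∑ n ∈ range r, M n = 3*d+1)
    (hQ : ∑ n ∈ range r, M n ^ 2 = d^2 - 1) :
    10 ≤ r ∧
      ((12 ≤ r ∧ d = 4 ∧ M 0 = 2 ∧ (∀ n, 1 ≤ n → n ≤ 11 → M n = 1) ∧ (∀ n, 12 ≤ n → M n = 0)) ∨
       (11 ≤ r ∧ d = 6 ∧ (∀ n, n ≤ 7 → M n = 2) ∧ (∀ n, 8 ≤ n → n ≤ 10 → M n = 1) ∧ (∀ n, 11 ≤ n → M n = 0)) ∨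
       (10 ≤ r ∧ d = 9 ∧ (∀ n, n ≤ 7 → M n = 3) ∧ (∀ n, 8 ≤ n → n ≤ 9 → M n = 2) ∧ (∀ n, 10 ≤ n → M n = 0))) := by
  have hba : M 1 ≤ M 0 := hmono 0 1 (by omega)
  have htb : M 2 ≤ M 1 := hmono 1 2 (by omega)
  have hd0 : 0 ≤ d := le_trans (by have := hnn 0; have := hnn 1; have := hnn 2; linarith) h3
  -- split sums at 2
  have split2S : ∑ n ∈ range r, M n = M 0 + M 1 + ∑ n ∈ Ico 2 r, M n := by
    rw [sum_split' (f := M) (show 2 ≤ r by omega)]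
    simp [Finset.sum_range_succ]
  have split2Q : ∑ n ∈ range r, M n ^ 2 = M 0 ^ 2 + M 1 ^ 2 + ∑ n ∈ Ico 2 r, M n ^ 2 := by
    rw [sum_split' (f := fun n => M n ^ 2) (show 2 ≤ r by omega)]
    simp [Finset.sum_range_succ]
  have hT2 : ∑ n ∈ Ico 2 r, M n = 3*d+1 - M 0 - M 1 := by
    rw [split2S] at hS; linarith
  have hU2 : ∑ n ∈ Ico 2 r, M n ^ 2 = d^2 - 1 - M 0 ^ 2 - M 1 ^ 2 := by
    rw [split2Q] at hQ; linarith
  have htail_le : ∀ n ∈ Ico 2 r, M n ≤ M 2 := fun n hn => hmono 2 n (Finset.mem_Ico.mp hn).1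
  have hE0 : 0 ≤ ∑ n ∈ Ico 2 r, M n * (M 2 - M n) :=
    Finset.sum_nonneg fun n hn => mul_nonneg (hnn n) (by have := htail_le n hn; linarith)
  have hEid : ∑ n ∈ Ico 2 r, M n * (M 2 - M n)
      = M 2 * (∑ n ∈ Ico 2 r, M n) - ∑ n ∈ Ico 2 r, M n ^ 2 := by
    rw [Finset.mul_sum, ← Finset.sum_sub_distrib]
    exact Finset.sum_congr rfl fun n _ => by ring
  have hE : 0 ≤ M 2 * (3*d+1 - M 0 - M 1) - (d^2 - 1 - M 0 ^ 2 - M 1 ^ 2) := by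
    rw [hEid, hT2, hU2] at hE0; linarith
  have ht3d : 3 * M 2 ≤ d := by linarith
  have ht1 : 1 ≤ M 2 := by
    by_contra hcon
    have ht0 : M 2 = 0 := le_antisymm (by omega) (hnn 2)
    have hz2 : ∑ n ∈ Ico 2 r, M n = 0 :=
      Finset.sum_eq_zero fun n hn => le_antisymm (by have := htail_le n hn; omega) (hnn n)
    rw [hz2] at hT2; linarith
  have hkey : 2 * M 2 * d ≤ 6 * M 2 ^ 2 + M 2 + 1 := by
    nlinarith [hE, mul_nonneg (show (0:ℤ) ≤ M 1 - M 2 by linarith) (show (0:ℤ) ≤ M 0 - M 2 by linarith),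
      mul_nonneg (show (0:ℤ) ≤ d - M 2 - M 0 - M 1 by linarith)
        (show (0:ℤ) ≤ d + M 0 + M 1 - 4 * M 2 by linarith)]
  -- r ≥ 10 in general
  have hcard2 : ((Ico 2 r).card : ℤ) = (r : ℤ) - 2 := by rw [Nat.card_Ico]; omega
  have hr10 : 10 ≤ r := by
    by_contra hcon
    have h9 : r ≤ 9 := by omega
    have hb := sum_le_card' (Ico 2 r) M (M 2) htail_le
    rw [hT2, hcard2] at hb
    have h7 : ((r : ℤ) - 2) * M 2 ≤ 7 * M 2 :=
      mul_le_mul_of_nonneg_right (by omega : ((r:ℤ) - 2) ≤ 7) (by linarith)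
    linarith
  refine ⟨hr10, ?_⟩
  rcases le_or_gt 4 (M 2) with ht4 | htlt
  · -- case t ≥ 4 : contradiction
    exfalso
    have hd3t : d = 3 * M 2 := by
      by_contra hne
      have hge : 3 * M 2 + 1 ≤ d := by omega
      nlinarith [mul_le_mul_of_nonneg_left hge (show (0:ℤ) ≤ M 2 by linarith)]
    have ha : M 0 = M 2 := by omega
    have hb : M 1 = M 2 := by omega
    have hT2' : ∑ n ∈ Ico 2 r, M n = 7 * M 2 + 1 := by rw [hT2, ha, hb, hd3t]; ring
    have hU2' : ∑ n ∈ Ico 2 r, M n ^ 2 = 7 * M 2 ^ 2 - 1 := by rw [hU2, ha, hb, hd3t]; ring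
    have hG : ∑ n ∈ Ico 2 r, M n * (M 2 - M n) = M 2 + 1 := by
      rw [hEid, hT2', hU2']; ring
    -- Step A : M n = M 2 for 2 ≤ n ≤ 7
    have hstepA : ∀ n, 2 ≤ n → n ≤ 7 → M n = M 2 := by
      intro n0 h2n hn7
      by_contra hne
      have hlt : M n0 ≤ M 2 - 1 := by have := hmono 2 n0 h2n; omega
      have hn0r : n0 ≤ r := by omega
      have hIsplit : ∑ n ∈ Ico 2 r, M n = (∑ n ∈ Ico 2 n0, M n) + ∑ n ∈ Ico n0 r, M n :=
        (Finset.sum_Ico_consecutive M h2n (by omega)).symm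
      have hp1 : ∑ n ∈ Ico n0 r, M n ≤ ∑ n ∈ Ico n0 r, M n * (M 2 - M n) := by
        apply Finset.sum_le_sum
        intro k hk
        have hkm : M k ≤ M n0 := hmono n0 k (Finset.mem_Ico.mp hk).1
        linarith [mul_nonneg (hnn k) (show (0:ℤ) ≤ M 2 - 1 - M k by linarith)]
      have hp2 : ∑ n ∈ Ico n0 r, M n * (M 2 - M n) ≤ M 2 + 1 := by
        rw [← hG]
        apply Finset.sum_le_sum_of_subset_of_nonneg (Finset.Ico_subset_Ico h2n le_rfl)
        intro k hk _
        exact mul_nonneg (hnn k) (by have := htail_le k hk; linarith)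
      have hp3 : ∑ n ∈ Ico 2 n0, M n ≤ ((Ico 2 n0).card : ℤ) * M 2 :=
        sum_le_card' _ _ _ (fun k hk => hmono 2 k (Finset.mem_Ico.mp hk).1)
      have hcard : ((Ico 2 n0).card : ℤ) ≤ 5 := by rw [Nat.card_Ico]; omega
      have h5t : ((Ico 2 n0).card : ℤ) * M 2 ≤ 5 * M 2 :=
        mul_le_mul_of_nonneg_right hcard (by linarith)
      linarith
    -- sums over [2,8)
    have h8r : 8 ≤ r := by omega
    have hc28 : ∑ n ∈ Ico 2 8, M n = 6 * M 2 := by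
      have : ∀ n ∈ Ico 2 8, M n = M 2 := by
        intro n hn
        have := Finset.mem_Ico.mp hn
        exact hstepA n this.1 (by omega)
      rw [Finset.sum_congr rfl this, Finset.sum_const, Nat.card_Ico]
      push_cast; ring
    have hc28G : ∑ n ∈ Ico 2 8, M n * (M 2 - M n) = 0 := by
      apply Finset.sum_eq_zero
      intro n hn
      have := Finset.mem_Ico.mp hn
      rw [hstepA n this.1 (by omega)]; ring
    have hsplit8 : ∀ f : ℕ → ℤ, ∑ n ∈ Ico 2 r, f n = (∑ n ∈ Ico 2 8, f n) + ∑ n ∈ Ico 8 r, f n :=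
      fun f => (Finset.sum_Ico_consecutive f (by omega) (by omega)).symm
    have hT8 : ∑ n ∈ Ico 8 r, M n = M 2 + 1 := by
      have := hsplit8 M; rw [hT2', hc28] at this; linarith
    have hG8 : ∑ n ∈ Ico 8 r, M n * (M 2 - M n) = M 2 + 1 := by
      have := hsplit8 (fun n => M n * (M 2 - M n)); rw [hG, hc28G] at this; linarith
    rcases le_or_gt (M 2) (M 8) with hM8 | hM8
    · -- M 8 = t
      have hM8t : M 8 = M 2 := le_antisymm (hmono 2 8 (by omega)) hM8
      have h8lt : 8 < r := by omega
      have hbot : ∑ n ∈ Ico 8 r, M n = M 8 + ∑ n ∈ Ico 9 r, M n :=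
        Finset.sum_eq_sum_Ico_succ_bot h8lt M
      have hT9 : ∑ n ∈ Ico 9 r, M n = 1 := by rw [hT8, hM8t] at hbot; linarith
      have hle1 : ∀ k ∈ Ico 9 r, M k ≤ 1 := by
        intro k hk
        calc M k ≤ ∑ n ∈ Ico 9 r, M n := Finset.single_le_sum (fun i _ => hnn i) hk
        _ = 1 := hT9
      have hG9 : ∑ n ∈ Ico 9 r, M n * (M 2 - M n) = (M 2 - 1) * ∑ n ∈ Ico 9 r, M n := by
        rw [Finset.mul_sum]
        apply Finset.sum_congr rfl
        intro k hk
        have h01 : M k = 0 ∨ M k = 1 := by have := hnn k; have := hle1 k hk; omega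
        rcases h01 with h | h <;> rw [h] <;> ring
      have hbotG : ∑ n ∈ Ico 8 r, M n * (M 2 - M n)
          = M 8 * (M 2 - M 8) + ∑ n ∈ Ico 9 r, M n * (M 2 - M n) :=
        Finset.sum_eq_sum_Ico_succ_bot h8lt _
      rw [hG8, hG9, hT9, hM8t] at hbotG
      linarith
    · -- M 8 ≤ t - 1 : all entries of the tail are 0 or t-1, divisibility contradiction
      have hd8 : ∀ k ∈ Ico 8 r, M k ≤ M 2 - 1 := by
        intro k hk
        have := hmono 8 k (Finset.mem_Ico.mp hk).1; omega
      have hzero8 : ∑ n ∈ Ico 8 r, (M n * (M 2 - M n) - M n) = 0 := by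
        rw [Finset.sum_sub_distrib, hG8, hT8]; ring
      have heach : ∀ k ∈ Ico 8 r, M k * (M 2 - M k) - M k = 0 := by
        apply (Finset.sum_eq_zero_iff_of_nonneg _).mp hzero8
        intro k hk
        have h1 := hnn k
        have h2 := hd8 k hk
        linarith [mul_nonneg h1 (show (0:ℤ) ≤ M 2 - 1 - M k by linarith)]
      have hdvd : ∀ k ∈ Ico 8 r, (M 2 - 1) ∣ M k := by
        intro k hk
        have h0 := heach k hk
        have : M k * (M 2 - 1 - M k) = 0 := by linarith [h0]
        rcases mul_eq_zero.mp this with h | h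
        · exact ⟨0, by omega⟩
        · exact ⟨1, by omega⟩
      have hdvds : (M 2 - 1) ∣ ∑ n ∈ Ico 8 r, M n := Finset.dvd_sum hdvd
      rw [hT8] at hdvds
      obtain ⟨c, hc⟩ := hdvds
      rcases le_or_gt c 1 with hcle | hcge
      · have h := mul_le_mul_of_nonneg_left hcle (show (0:ℤ) ≤ M 2 - 1 by linarith)
        linarith only [h, hc, ht4]
      · have h2c : (2:ℤ) ≤ c := by omega
        have h := mul_le_mul_of_nonneg_left h2c (show (0:ℤ) ≤ M 2 - 1 by linarith)
        linarith only [h, hc, ht4]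
  · have hcase : M 2 = 1 ∨ M 2 = 2 ∨ M 2 = 3 := by omega
    have hrange_sub : ∀ n0 : ℕ, Ico n0 r ⊆ range r := by
      intro n0; rw [range_eq_Ico]; exact Finset.Ico_subset_Ico (Nat.zero_le _) le_rfl
    rcases hcase with ht | ht | ht
    · -- t = 1 : the class G1
      left
      have hd4 : d ≤ 4 := by rw [ht] at hkey; linarith
      have hd3 : 3 ≤ d := by rw [ht] at ht3d; linarith
      have hsq : ∀ n ∈ Ico 2 r, M n ^ 2 = M n := by
        intro k hk
        have h1 := hnn k
        have h2 := htail_le k hk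
        rw [ht] at h2
        have hv : M k = 0 ∨ M k = 1 := by omega
        rcases hv with h | h <;> rw [h] <;> ring
      have hQT : ∑ n ∈ Ico 2 r, M n ^ 2 = ∑ n ∈ Ico 2 r, M n := Finset.sum_congr rfl hsq
      have hFF : M 0 ^ 2 + M 1 ^ 2 - M 0 - M 1 = d ^ 2 - 3 * d - 2 := by
        rw [hQT, hT2] at hU2; linarith
      have hM1b : 1 ≤ M 1 := by omega
      have hd : d = 4 := by
        rcases (show d = 3 ∨ d = 4 by omega) with h | h
        · exfalso
          have p1 : 0 ≤ (M 0 - 1) * M 0 := mul_nonneg (by linarith) (hnn 0)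
          have p2 : 0 ≤ (M 1 - 1) * M 1 := mul_nonneg (by linarith) (hnn 1)
          rw [h] at hFF
          linarith only [p1, p2, hFF]
        · exact h
      have hM1 : M 1 = 1 := by omega
      have hM0 : M 0 = 2 := by
        rcases (show M 0 = 1 ∨ M 0 = 2 by omega) with h | h
        · exfalso; rw [h, hM1, hd] at hFF; norm_num at hFF
        · exact h
      have split1S : ∑ n ∈ range r, M n = M 0 + ∑ n ∈ Ico 1 r, M n := by
        rw [sum_split' (f := M) (show 1 ≤ r by omega)]; simp
      have hT1 : ∑ n ∈ Ico 1 r, M n = 11 := by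
        rw [split1S, hM0, hd] at hS; linarith
      have htail1 : ∀ k ∈ Ico 1 r, M k ≤ 1 := by
        intro k hk
        have := hmono 1 k (Finset.mem_Ico.mp hk).1; omega
      have hr12 : 12 ≤ r := by
        have hb := sum_le_card' (Ico 1 r) M 1 htail1
        rw [hT1, Nat.card_Ico, mul_one] at hb
        omega
      have hmid : ∀ n, 1 ≤ n → n ≤ 11 → M n = 1 := by
        intro n0 h1n hn11
        by_contra hne
        have h0 : M n0 = 0 := by
          have := htail1 n0 (Finset.mem_Ico.mpr ⟨h1n, by omega⟩)
          have := hnn n0; omega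
        have hsplit : ∑ n ∈ Ico 1 r, M n = (∑ n ∈ Ico 1 n0, M n) + ∑ n ∈ Ico n0 r, M n :=
          (Finset.sum_Ico_consecutive M h1n (by omega)).symm
        have hz : ∑ n ∈ Ico n0 r, M n = 0 := Finset.sum_eq_zero fun k hk =>
          le_antisymm (by have := hmono n0 k (Finset.mem_Ico.mp hk).1; omega) (hnn k)
        have hub : ∑ n ∈ Ico 1 n0, M n ≤ ((Ico 1 n0).card : ℤ) * 1 :=
          sum_le_card' _ _ _ (fun k hk => by
            have := hmono 1 k (Finset.mem_Ico.mp hk).1; omega)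
        rw [Nat.card_Ico, mul_one] at hub
        rw [hT1, hz] at hsplit
        omega
      have hz12 : ∀ n, 12 ≤ n → M n = 0 := by
        intro n0 h12
        rcases le_or_gt r n0 with h | h
        · exact hzero n0 h
        · by_contra hne
          have h1 : 1 ≤ M n0 := by have := hnn n0; omega
          have hlb : ((Ico 1 (n0+1)).card : ℤ) * 1 ≤ ∑ n ∈ Ico 1 (n0+1), M n :=
            card_le_sum' _ _ _ (fun k hk =>
              le_trans h1 (hmono k n0 (by have := Finset.mem_Ico.mp hk; omega)))
          have hsplit : ∑ n ∈ Ico 1 r, M n = (∑ n ∈ Ico 1 (n0+1), M n) + ∑ n ∈ Ico (n0+1) r, M n :=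
            (Finset.sum_Ico_consecutive M (by omega) (by omega)).symm
          have hnn2 : 0 ≤ ∑ n ∈ Ico (n0+1) r, M n := Finset.sum_nonneg fun k _ => hnn k
          rw [hT1] at hsplit
          rw [Nat.card_Ico, mul_one] at hlb
          omega
      exact ⟨hr12, hd, hM0, hmid, hz12⟩
    · -- t = 2 : the class G2
      right; left
      have hd6 : d = 6 := by rw [ht] at hkey ht3d; omega
      have hM0 : M 0 = 2 := by omega
      have hM1 : M 1 = 2 := by omega
      have hle2 : ∀ n, M n ≤ 2 := fun n => by
        have := hmono 0 n (Nat.zero_le n); omega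
      have hS' : ∑ n ∈ range r, M n = 19 := by rw [hd6] at hS; linarith
      have hQ' : ∑ n ∈ range r, M n ^ 2 = 35 := by rw [hd6] at hQ; norm_num at hQ; exact hQ
      have hGall : ∑ n ∈ range r, M n * (2 - M n) = 3 := by
        have he : ∑ n ∈ range r, M n * (2 - M n)
            = 2 * (∑ n ∈ range r, M n) - ∑ n ∈ range r, M n ^ 2 := by
          rw [Finset.mul_sum, ← Finset.sum_sub_distrib]
          exact Finset.sum_congr rfl fun n _ => by ring
        rw [he, hS', hQ']; ring
      have hGnn : ∀ k, 0 ≤ M k * (2 - M k) := fun k =>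
        mul_nonneg (hnn k) (by have := hle2 k; linarith)
      have hr11 : 11 ≤ r := by
        have hcomp : ∑ n ∈ range r, M n * (2 - M n) ≤ ∑ n ∈ range r, (2 - M n) := by
          apply Finset.sum_le_sum
          intro k _
          have h1 := hnn k; have h2 := hle2 k
          have hv : M k = 0 ∨ M k = 1 ∨ M k = 2 := by omega
          rcases hv with h | h | h <;> rw [h] <;> norm_num
        have h2m : ∑ n ∈ range r, (2 - M n) = 2 * r - 19 := by
          rw [Finset.sum_sub_distrib, Finset.sum_const, Finset.card_range, hS', nsmul_eq_mul]
          ring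
        rw [hGall, h2m] at hcomp
        omega
      have hc2 : ∀ n, n ≤ 7 → M n = 2 := by
        intro n0 hn7
        by_contra hne
        have hlt : M n0 ≤ 1 := by have := hle2 n0; omega
        have hsplit := sum_split' (f := M) (show n0 ≤ r by omega)
        have hp1 : ∑ n ∈ Ico n0 r, M n ≤ ∑ n ∈ Ico n0 r, M n * (2 - M n) := by
          apply Finset.sum_le_sum
          intro k hk
          have hk1 : M k ≤ 1 := le_trans (hmono n0 k (Finset.mem_Ico.mp hk).1) hlt
          have h1 := hnn k
          have hv : M k = 0 ∨ M k = 1 := by omega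
          rcases hv with h | h <;> rw [h] <;> norm_num
        have hp2 : ∑ n ∈ Ico n0 r, M n * (2 - M n) ≤ 3 := by
          rw [← hGall]
          exact Finset.sum_le_sum_of_subset_of_nonneg (hrange_sub n0) (fun k _ _ => hGnn k)
        have hp3 : ∑ n ∈ range n0, M n ≤ ((range n0).card : ℤ) * 2 :=
          sum_le_card' _ _ _ (fun k _ => hle2 k)
        rw [Finset.card_range] at hp3
        rw [hS'] at hsplit
        have : ((n0 : ℤ)) ≤ 7 := by omega
        omega
      have hle1' : ∀ n, 8 ≤ n → M n ≤ 1 := by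
        intro n0 h8
        rcases le_or_gt r n0 with h | h
        · rw [hzero n0 h]; norm_num
        · by_contra hne
          have h2' : M n0 = 2 := by have := hle2 n0; omega
          have hall : ∀ k ∈ range (n0+1), M k = 2 := by
            intro k hk
            have hkn : k ≤ n0 := by have := Finset.mem_range.mp hk; omega
            have := hmono k n0 hkn
            have := hle2 k; omega
          have hhead : ∑ n ∈ range (n0+1), M n = 2 * ((n0:ℤ) + 1) := by
            rw [Finset.sum_congr rfl hall, Finset.sum_const, Finset.card_range, nsmul_eq_mul]
            push_cast; ring
          have hsplit := sum_split' (f := M) (show n0 + 1 ≤ r by omega)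
          have hsplitG : ∑ n ∈ range r, M n * (2 - M n)
              = (∑ n ∈ range (n0+1), M n * (2 - M n)) + ∑ n ∈ Ico (n0+1) r, M n * (2 - M n) :=
            sum_split' (show n0 + 1 ≤ r by omega)
          have hheadG : ∑ n ∈ range (n0+1), M n * (2 - M n) = 0 :=
            Finset.sum_eq_zero fun k hk => by rw [hall k hk]; ring
          have htailG : ∑ n ∈ Ico (n0+1) r, M n * (2 - M n) ≤ ∑ n ∈ Ico (n0+1) r, M n := by
            apply Finset.sum_le_sum
            intro k _
            have h1 := hnn k; have h2 := hle2 k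
            have hv : M k = 0 ∨ M k = 1 ∨ M k = 2 := by omega
            rcases hv with h | h | h <;> rw [h] <;> norm_num
          rw [hS', hhead] at hsplit
          rw [hGall, hheadG] at hsplitG
          have h8' : (8:ℤ) ≤ (n0:ℤ) := by omega
          omega
      have hge1 : ∀ n, n ≤ 10 → 1 ≤ M n := by
        intro n0 h10
        by_contra hne
        have h0 : M n0 = 0 := by have := hnn n0; omega
        have htz : ∀ k ∈ Ico n0 r, M k = 0 := fun k hk =>
          le_antisymm (by have := hmono n0 k (Finset.mem_Ico.mp hk).1; omega) (hnn k)
        have htailz : ∑ n ∈ Ico n0 r, M n = 0 := Finset.sum_eq_zero htz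
        have htailGz : ∑ n ∈ Ico n0 r, M n * (2 - M n) = 0 :=
          Finset.sum_eq_zero fun k hk => by rw [htz k hk]; ring
        have hsplit := sum_split' (f := M) (show n0 ≤ r by omega)
        have hsplitG : ∑ n ∈ range r, M n * (2 - M n)
            = (∑ n ∈ range n0, M n * (2 - M n)) + ∑ n ∈ Ico n0 r, M n * (2 - M n) :=
          sum_split' (show n0 ≤ r by omega)
        rw [hS', htailz] at hsplit
        rw [hGall, htailGz] at hsplitG
        have hcompn : ∑ n ∈ range n0, M n * (2 - M n) ≤ ∑ n ∈ range n0, (2 - M n) := by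
          apply Finset.sum_le_sum
          intro k _
          have h1 := hnn k; have h2 := hle2 k
          have hv : M k = 0 ∨ M k = 1 ∨ M k = 2 := by omega
          rcases hv with h | h | h <;> rw [h] <;> norm_num
        have h2mn : ∑ n ∈ range n0, (2 - M n) = 2 * (n0:ℤ) - 19 := by
          rw [Finset.sum_sub_distrib, Finset.sum_const, Finset.card_range, nsmul_eq_mul]
          omega
        rw [h2mn] at hcompn
        omega
      have hz11 : ∀ n, 11 ≤ n → M n = 0 := by
        intro n0 h11
        rcases le_or_gt r n0 with h | h
        · exact hzero n0 h
        · by_contra hne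
          have h1M : 1 ≤ M n0 := by have := hnn n0; omega
          have hall1 : ∀ k ∈ range (n0+1), 1 ≤ M k := by
            intro k hk
            exact le_trans h1M (hmono k n0 (by have := Finset.mem_range.mp hk; omega))
          have hpt : ∑ n ∈ range (n0+1), (2 - M n * (2 - M n)) ≤ ∑ n ∈ range (n0+1), M n := by
            apply Finset.sum_le_sum
            intro k hk
            have h1 := hall1 k hk; have h2 := hle2 k
            have hv : M k = 1 ∨ M k = 2 := by omega
            rcases hv with hh | hh <;> rw [hh] <;> norm_num
          have hlhs : ∑ n ∈ range (n0+1), (2 - M n * (2 - M n))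
              = 2 * ((n0:ℤ)+1) - ∑ n ∈ range (n0+1), M n * (2 - M n) := by
            rw [Finset.sum_sub_distrib, Finset.sum_const, Finset.card_range, nsmul_eq_mul]
            push_cast; ring
          have hG3 : ∑ n ∈ range (n0+1), M n * (2 - M n) ≤ 3 := by
            rw [← hGall]
            apply Finset.sum_le_sum_of_subset_of_nonneg _ (fun k _ _ => hGnn k)
            exact Finset.range_subset_range.mpr (by omega)
          have hub19 : ∑ n ∈ range (n0+1), M n ≤ 19 := by
            have hsplit := sum_split' (f := M) (show n0 + 1 ≤ r by omega)
            have hnn2 : 0 ≤ ∑ n ∈ Ico (n0+1) r, M n := Finset.sum_nonneg fun k _ => hnn k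
            rw [hS'] at hsplit
            omega
          rw [hlhs] at hpt
          have : (11:ℤ) ≤ (n0:ℤ) := by omega
          omega
      have hmid : ∀ n, 8 ≤ n → n ≤ 10 → M n = 1 := fun n h8 h10 => by
        have := hle1' n h8; have := hge1 n h10; omega
      exact ⟨hr11, hd6, hc2, hmid, hz11⟩
    · -- t = 3 : the class G3
      right; right
      have hd9 : d = 9 := by rw [ht] at hkey ht3d; omega
      have hM0 : M 0 = 3 := by omega
      have hM1 : M 1 = 3 := by omega
      have hle3 : ∀ n, M n ≤ 3 := fun n => by
        have := hmono 0 n (Nat.zero_le n); omega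
      have hS' : ∑ n ∈ range r, M n = 28 := by rw [hd9] at hS; linarith
      have hQ' : ∑ n ∈ range r, M n ^ 2 = 80 := by rw [hd9] at hQ; norm_num at hQ; exact hQ
      have hGall : ∑ n ∈ range r, M n * (3 - M n) = 4 := by
        have he : ∑ n ∈ range r, M n * (3 - M n)
            = 3 * (∑ n ∈ range r, M n) - ∑ n ∈ range r, M n ^ 2 := by
          rw [Finset.mul_sum, ← Finset.sum_sub_distrib]
          exact Finset.sum_congr rfl fun n _ => by ring
        rw [he, hS', hQ']; ring
      have hGnn : ∀ k, 0 ≤ M k * (3 - M k) := fun k =>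
        mul_nonneg (hnn k) (by have := hle3 k; linarith)
      have hc3 : ∀ n, n ≤ 7 → M n = 3 := by
        intro n0 hn7
        by_contra hne
        have hlt : M n0 ≤ 2 := by have := hle3 n0; omega
        have hsplit := sum_split' (f := M) (show n0 ≤ r by omega)
        have hp1 : ∑ n ∈ Ico n0 r, M n ≤ ∑ n ∈ Ico n0 r, M n * (3 - M n) := by
          apply Finset.sum_le_sum
          intro k hk
          have hk1 : M k ≤ 2 := le_trans (hmono n0 k (Finset.mem_Ico.mp hk).1) hlt
          have h1 := hnn k
          have hv : M k = 0 ∨ M k = 1 ∨ M k = 2 := by omega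
          rcases hv with h | h | h <;> rw [h] <;> norm_num
        have hp2 : ∑ n ∈ Ico n0 r, M n * (3 - M n) ≤ 4 := by
          rw [← hGall]
          exact Finset.sum_le_sum_of_subset_of_nonneg (hrange_sub n0) (fun k _ _ => hGnn k)
        have hp3 : ∑ n ∈ range n0, M n ≤ ((range n0).card : ℤ) * 3 :=
          sum_le_card' _ _ _ (fun k _ => hle3 k)
        rw [Finset.card_range] at hp3
        rw [hS'] at hsplit
        have : ((n0 : ℤ)) ≤ 7 := by omega
        omega
      have hle2' : ∀ n, 8 ≤ n → M n ≤ 2 := by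
        intro n0 h8
        rcases le_or_gt r n0 with h | h
        · rw [hzero n0 h]; norm_num
        · by_contra hne
          have h3' : M n0 = 3 := by have := hle3 n0; omega
          have hall : ∀ k ∈ range (n0+1), M k = 3 := by
            intro k hk
            have hkn : k ≤ n0 := by have := Finset.mem_range.mp hk; omega
            have := hmono k n0 hkn
            have := hle3 k; omega
          have hhead : ∑ n ∈ range (n0+1), M n = 3 * ((n0:ℤ) + 1) := by
            rw [Finset.sum_congr rfl hall, Finset.sum_const, Finset.card_range, nsmul_eq_mul]
            push_cast; ring
          have hsplit := sum_split' (f := M) (show n0 + 1 ≤ r by omega)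
          have hsplitG : ∑ n ∈ range r, M n * (3 - M n)
              = (∑ n ∈ range (n0+1), M n * (3 - M n)) + ∑ n ∈ Ico (n0+1) r, M n * (3 - M n) :=
            sum_split' (show n0 + 1 ≤ r by omega)
          have hheadG : ∑ n ∈ range (n0+1), M n * (3 - M n) = 0 :=
            Finset.sum_eq_zero fun k hk => by rw [hall k hk]; ring
          have htailG : ∑ n ∈ Ico (n0+1) r, M n * (3 - M n) ≤ 2 * ∑ n ∈ Ico (n0+1) r, M n := by
            rw [Finset.mul_sum]
            apply Finset.sum_le_sum
            intro k _
            have h1 := hnn k; have h2 := hle3 k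
            have hv : M k = 0 ∨ M k = 1 ∨ M k = 2 ∨ M k = 3 := by omega
            rcases hv with hh | hh | hh | hh <;> rw [hh] <;> norm_num
          rw [hS', hhead] at hsplit
          rw [hGall, hheadG] at hsplitG
          have h8' : (8:ℤ) ≤ (n0:ℤ) := by omega
          omega
      have hz10 : ∀ n, 10 ≤ n → M n = 0 := by
        intro n0 h10
        rcases le_or_gt r n0 with h | h
        · exact hzero n0 h
        · by_contra hne
          have h1M : 1 ≤ M n0 := by have := hnn n0; omega
          have hall1 : ∀ k ∈ range (n0+1), 1 ≤ M k := by
            intro k hk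
            exact le_trans h1M (hmono k n0 (by have := Finset.mem_range.mp hk; omega))
          have hpt : ∑ n ∈ range (n0+1), (3 - M n * (3 - M n)) ≤ ∑ n ∈ range (n0+1), M n := by
            apply Finset.sum_le_sum
            intro k hk
            have h1 := hall1 k hk; have h2 := hle3 k
            have hv : M k = 1 ∨ M k = 2 ∨ M k = 3 := by omega
            rcases hv with hh | hh | hh <;> rw [hh] <;> norm_num
          have hlhs : ∑ n ∈ range (n0+1), (3 - M n * (3 - M n))
              = 3 * ((n0:ℤ)+1) - ∑ n ∈ range (n0+1), M n * (3 - M n) := by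
            rw [Finset.sum_sub_distrib, Finset.sum_const, Finset.card_range, nsmul_eq_mul]
            push_cast; ring
          have hG4 : ∑ n ∈ range (n0+1), M n * (3 - M n) ≤ 4 := by
            rw [← hGall]
            apply Finset.sum_le_sum_of_subset_of_nonneg _ (fun k _ _ => hGnn k)
            exact Finset.range_subset_range.mpr (by omega)
          have hub28 : ∑ n ∈ range (n0+1), M n ≤ 28 := by
            have hsplit := sum_split' (f := M) (show n0 + 1 ≤ r by omega)
            have hnn2 : 0 ≤ ∑ n ∈ Ico (n0+1) r, M n := Finset.sum_nonneg fun k _ => hnn k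
            rw [hS'] at hsplit
            omega
          rw [hlhs] at hpt
          have : (10:ℤ) ≤ (n0:ℤ) := by omega
          omega
      have hM9 : 2 ≤ M 9 := by
        by_contra hne
        have hM9le : M 9 ≤ 1 := by omega
        have h9r : (9:ℕ) < r := by omega
        have htail01 : ∀ k ∈ Ico 9 r, M k ≤ 1 := fun k hk =>
          le_trans (hmono 9 k (Finset.mem_Ico.mp hk).1) hM9le
        have hGtail : ∑ n ∈ Ico 9 r, M n * (3 - M n) = 2 * ∑ n ∈ Ico 9 r, M n := by
          rw [Finset.mul_sum]
          apply Finset.sum_congr rfl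
          intro k hk
          have h1 := hnn k
          have h2 := htail01 k hk
          have hv : M k = 0 ∨ M k = 1 := by omega
          rcases hv with hh | hh <;> rw [hh] <;> ring
        have hsplitS := sum_split' (f := M) (show 9 ≤ r by omega)
        have hsplitG : ∑ n ∈ range r, M n * (3 - M n)
            = (∑ n ∈ range 9, M n * (3 - M n)) + ∑ n ∈ Ico 9 r, M n * (3 - M n) :=
          sum_split' (show 9 ≤ r by omega)
        rw [hS'] at hsplitS
        rw [hGall, hGtail] at hsplitG
        have hu2 : 0 ≤ ∑ n ∈ range 9, M n * (3 - M n) :=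
          Finset.sum_nonneg fun k _ => hGnn k
        have h3mn : ∑ n ∈ range 9, (3 - M n) = 27 - ∑ n ∈ range 9, M n := by
          rw [Finset.sum_sub_distrib, Finset.sum_const, Finset.card_range, nsmul_eq_mul]
          norm_num
        have hu1 : 0 ≤ ∑ n ∈ range 9, (3 - M n) :=
          Finset.sum_nonneg fun k _ => by have := hle3 k; linarith
        have hcomp9 : ∑ n ∈ range 9, M n * (3 - M n) ≤ ∑ n ∈ range 9, (2 * (3 - M n)) := by
          apply Finset.sum_le_sum
          intro k _
          have h1 := hnn k; have h2 := hle3 k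
          have hv : M k = 0 ∨ M k = 1 ∨ M k = 2 ∨ M k = 3 := by omega
          rcases hv with hh | hh | hh | hh <;> rw [hh] <;> norm_num
        have hcomp9' : ∑ n ∈ range 9, (2 * (3 - M n)) = 2 * ∑ n ∈ range 9, (3 - M n) := by
          rw [Finset.mul_sum]
        -- let u be the tail sum
        have hu : ∑ n ∈ Ico 9 r, M n = 2 := by
          rw [h3mn] at hu1 hcomp9'
          omega
        have hheadS : ∑ n ∈ range 9, M n = 26 := by omega
        have hheadG0 : ∑ n ∈ range 9, M n * (3 - M n) = 0 := by omega
        have heach := (Finset.sum_eq_zero_iff_of_nonneg (fun k _ => hGnn k)).mp hheadG0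
        have hdvd : ∀ k ∈ range 9, (3:ℤ) ∣ M k := by
          intro k hk
          have h0 := heach k hk
          rcases mul_eq_zero.mp h0 with hh | hh
          · exact ⟨0, by omega⟩
          · exact ⟨1, by omega⟩
        have hdvds : (3:ℤ) ∣ ∑ n ∈ range 9, M n := Finset.dvd_sum hdvd
        rw [hheadS] at hdvds
        norm_num at hdvds
      have hmid : ∀ n, 8 ≤ n → n ≤ 9 → M n = 2 := by
        intro n h8 h9
        have hle8 := hle2' 8 (le_refl 8)
        have hle9 := hle2' 9 (by omega)
        have h89 := hmono 8 9 (by omega)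
        have hv : n = 8 ∨ n = 9 := by omega
        rcases hv with hh | hh <;> subst hh <;> omega
      exact ⟨hr10, hd9, hc3, hmid, hz10⟩

theorem isolated_genus_two_classes (r : ℕ) (hr : 3 ≤ r) (H : Fin (r + 1) → ℤ)
    (hst : EStandard r H) (h1 : inter H H = 1) (h2 : inter H (Kc r) = 1) :
    10 ≤ r ∧
      ((12 ≤ r ∧ H 0 = 4 ∧
          (∀ i : Fin (r + 1), (i : ℕ) = 1 → H i = -2) ∧
          (∀ i : Fin (r + 1), 2 ≤ (i : ℕ) → (i : ℕ) ≤ 12 → H i = -1) ∧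
          (∀ i : Fin (r + 1), 12 < (i : ℕ) → H i = 0)) ∨
        (11 ≤ r ∧ H 0 = 6 ∧
          (∀ i : Fin (r + 1), 1 ≤ (i : ℕ) → (i : ℕ) ≤ 8 → H i = -2) ∧
          (∀ i : Fin (r + 1), 9 ≤ (i : ℕ) → (i : ℕ) ≤ 11 → H i = -1) ∧
          (∀ i : Fin (r + 1), 11 < (i : ℕ) → H i = 0)) ∨
        (10 ≤ r ∧ H 0 = 9 ∧
          (∀ i : Fin (r + 1), 1 ≤ (i : ℕ) → (i : ℕ) ≤ 8 → H i = -3) ∧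
          (∀ i : Fin (r + 1), 9 ≤ (i : ℕ) → (i : ℕ) ≤ 10 → H i = -2) ∧
          (∀ i : Fin (r + 1), 10 < (i : ℕ) → H i = 0))) := by
  obtain ⟨hm1, hsorted, hlast, hm12, hm123⟩ := hst
  set M : ℕ → ℤ := fun n => if h : n + 1 < r + 1 then -H ⟨n+1, h⟩ else 0 with hMdef
  have hv1 : ((1 : Fin (r+1)) : ℕ) = 1 := by
    show 1 % (r+1) = 1; exact Nat.mod_eq_of_lt (by omega)
  have hv2 : ((2 : Fin (r+1)) : ℕ) = 2 := by
    show 2 % (r+1) = 2; exact Nat.mod_eq_of_lt (by omega)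
  have hv3 : ((3 : Fin (r+1)) : ℕ) = 3 := by
    show 3 % (r+1) = 3; exact Nat.mod_eq_of_lt (by omega)
  have key : ∀ j : Fin r, H j.succ = -M (j : ℕ) := by
    intro j
    have hj : (j : ℕ) + 1 < r + 1 := by omega
    have e : (⟨(j:ℕ)+1, hj⟩ : Fin (r+1)) = j.succ := rfl
    simp only [hMdef]
    rw [dif_pos hj, e]
    ring
  have hHM : ∀ i : Fin (r+1), 1 ≤ (i:ℕ) → H i = -M ((i:ℕ) - 1) := by
    intro i hi
    have hlt : (i:ℕ) - 1 < r := by have := i.isLt; omega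
    have hk := key ⟨(i:ℕ)-1, hlt⟩
    have heq : (⟨(i:ℕ)-1, hlt⟩ : Fin r).succ = i := by
      apply Fin.ext
      show (i:ℕ) - 1 + 1 = (i:ℕ)
      omega
    rwa [heq] at hk
  have hzero : ∀ n, r ≤ n → M n = 0 := by
    intro n h
    simp only [hMdef]
    rw [dif_neg (by omega)]
  have hnn : ∀ n, 0 ≤ M n := by
    intro n
    rcases lt_or_ge n r with h | h
    · have en : M n = -H ⟨n+1, by omega⟩ := by
        simp only [hMdef]; rw [dif_pos (by omega : n + 1 < r + 1)]
      rw [en]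
      have hle := hsorted ⟨n+1, by omega⟩ (Fin.last r)
        (by exact Nat.succ_le_succ (Nat.zero_le n))
        (by rw [Fin.le_def, Fin.val_last]; exact (by omega : n + 1 ≤ r))
      linarith [hlast]
    · rw [hzero n h]
  have hmono : ∀ a b : ℕ, a ≤ b → M b ≤ M a := by
    intro a b hab
    rcases lt_or_ge b r with hb | hb
    · have ha : a < r := lt_of_le_of_lt hab hb
      have ea : M a = -H ⟨a+1, by omega⟩ := by
        simp only [hMdef]; rw [dif_pos (by omega : a + 1 < r + 1)]
      have eb : M b = -H ⟨b+1, by omega⟩ := by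
        simp only [hMdef]; rw [dif_pos (by omega : b + 1 < r + 1)]
      rw [ea, eb]
      exact hsorted ⟨a+1, by omega⟩ ⟨b+1, by omega⟩
        (by exact Nat.succ_le_succ (Nat.zero_le a))
        (by rw [Fin.le_def]; exact (by omega : a + 1 ≤ b + 1))
    · rw [hzero b hb]; exact hnn a
  -- the three leading multiplicities
  have t1 : H 1 = -M 0 := by
    have := hHM 1 (by rw [hv1]); rw [hv1] at this; exact this
  have t2 : H 2 = -M 1 := by
    have := hHM 2 (by rw [hv2]; omega); rw [hv2] at this; exact this
  have t3 : H 3 = -M 2 := by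
    have := hHM 3 (by rw [hv3]; omega); rw [hv3] at this; exact this
  have h3 : M 0 + M 1 + M 2 ≤ H 0 := by
    rw [t1, t2, t3] at hm123; linarith
  -- the two sums
  have hsum2 : ∑ i : Fin (r+1), H i * H i = H 0 * H 0 + ∑ n ∈ range r, M n ^ 2 := by
    rw [Fin.sum_univ_succ]
    congr 1
    rw [← Fin.sum_univ_eq_sum_range (fun n => M n ^ 2) r]
    apply Finset.sum_congr rfl
    intro j _
    rw [key j]; ring
  have hK0 : Kc r 0 = -3 := by simp [Kc]
  have hsumK : ∑ i : Fin (r+1), H i * Kc r i = H 0 * (-3) - ∑ n ∈ range r, M n := by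
    calc ∑ i : Fin (r+1), H i * Kc r i
        = H 0 * Kc r 0 + ∑ j : Fin r, H j.succ * Kc r j.succ := Fin.sum_univ_succ _
      _ = H 0 * (-3) + ∑ j : Fin r, -(M (j:ℕ)) := by
          rw [hK0]
          congr 1
          apply Finset.sum_congr rfl
          intro j _
          have hKs : Kc r j.succ = 1 := by
            simp [Kc, Fin.succ_ne_zero]
          rw [hKs, key j]; ring
      _ = H 0 * (-3) - ∑ n ∈ range r, M n := by
          rw [Finset.sum_neg_distrib, Fin.sum_univ_eq_sum_range M r]; ring
  have hQ : ∑ n ∈ range r, M n ^ 2 = (H 0)^2 - 1 := by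
    simp only [inter] at h1
    rw [hsum2] at h1
    linear_combination -h1
  have hS : ∑ n ∈ range r, M n = 3 * H 0 + 1 := by
    simp only [inter] at h2
    rw [hsumK, hK0] at h2
    linear_combination h2
  obtain ⟨hr10, hcases⟩ := classify r hr (H 0) M hmono hnn hzero h3 hS hQ
  refine ⟨hr10, ?_⟩
  rcases hcases with ⟨h12, hd4, hM0, hmid, hz⟩ | ⟨h11, hd6, hc2, hmid, hz⟩ | ⟨h10, hd9, hc3, hmid, hz⟩
  · left
    refine ⟨h12, hd4, ?_, ?_, ?_⟩
    · intro i hi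
      rw [hHM i (by omega), hi, hM0]
    · intro i hi2 hi12
      rw [hHM i (by omega), hmid ((i:ℕ)-1) (by omega) (by omega)]
    · intro i hi
      rw [hHM i (by omega), hz ((i:ℕ)-1) (by omega)]
      ring
  · right; left
    refine ⟨h11, hd6, ?_, ?_, ?_⟩
    · intro i hi1 hi8
      rw [hHM i (by omega), hc2 ((i:ℕ)-1) (by omega)]
    · intro i hi9 hi11
      rw [hHM i (by omega), hmid ((i:ℕ)-1) (by omega) (by omega)]
    · intro i hi
      rw [hHM i (by omega), hz ((i:ℕ)-1) (by omega)]
      ring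
  · right; right
    refine ⟨h10, hd9, ?_, ?_, ?_⟩
    · intro i hi1 hi8
      rw [hHM i (by omega), hc3 ((i:ℕ)-1) (by omega)]
    · intro i hi9 hi10
      rw [hHM i (by omega), hmid ((i:ℕ)-1) (by omega) (by omega)]
    · intro i hi
      rw [hHM i (by omega), hz ((i:ℕ)-1) (by omega)]
      ring
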